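/- Let t ∈ (0, π) and β ∈ [0, π/2) with t < β + π/2. Then (t·cot t − (1))/t² = −2 Σ_{k=1}^∞ 1/(π²k² − t²), and this quantity satisfies −2 Σ_{k=1}^∞ 1/(π²k² − t²) ≥ −2·(1/(π² − (β+π/2)²) + 3/(4π²)). -/

import Mathlib

open Real Filter Topology

lemma summable_one_div_shift_sq : Summable (fun n : ℕ => 1 / ((n : ℝ) + 1) ^ 2) := by
  have h := (summable_nat_add_iff (f := fun n : ℕ => 1 / (n : ℝ) ^ 2) 1).mpr
    (Real.summable_one_div_nat_pow.mpr one_lt_two)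
  simpa using h

lemma summable_cot_aux {b : ℝ} (x : ℝ) (hx0 : 0 < x) (hxb : x ≤ b) (hbπ : b < π) :
    Summable (fun n : ℕ => 1 / (π ^ 2 * ((n : ℝ) + 1) ^ 2 - x ^ 2)) := by
  have hb0 : 0 < b := hx0.trans_le hxb
  have hπ : 0 < π := pi_pos
  have key : ∀ n : ℕ, 0 < (π ^ 2 - b ^ 2) * ((n : ℝ) + 1) ^ 2 ∧
      (π ^ 2 - b ^ 2) * ((n : ℝ) + 1) ^ 2 ≤ π ^ 2 * ((n : ℝ) + 1) ^ 2 - x ^ 2 := by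
    intro n
    have hn : (1 : ℝ) ≤ (n : ℝ) + 1 := by linarith [Nat.cast_nonneg (α := ℝ) n]
    have hn2 : (1 : ℝ) ≤ ((n : ℝ) + 1) ^ 2 := by nlinarith
    have h1 : 0 < π ^ 2 - b ^ 2 := by nlinarith
    have hx2b : x ^ 2 ≤ b ^ 2 := by nlinarith
    have hbn : b ^ 2 * 1 ≤ b ^ 2 * ((n : ℝ) + 1) ^ 2 :=
      mul_le_mul_of_nonneg_left hn2 (sq_nonneg b)
    exact ⟨by positivity, by nlinarith⟩
  refine Summable.of_nonneg_of_le (fun n => ?_) (fun n => ?_)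
    (summable_one_div_shift_sq.mul_left (1 / (π ^ 2 - b ^ 2)))
  · have h := key n
    have : 0 < π ^ 2 * ((n : ℝ) + 1) ^ 2 - x ^ 2 := lt_of_lt_of_le h.1 h.2
    positivity
  · calc 1 / (π ^ 2 * ((n : ℝ) + 1) ^ 2 - x ^ 2)
        ≤ 1 / ((π ^ 2 - b ^ 2) * ((n : ℝ) + 1) ^ 2) := one_div_le_one_div_of_le (key n).1 (key n).2
      _ = 1 / (π ^ 2 - b ^ 2) * (1 / ((n : ℝ) + 1) ^ 2) := (one_div_mul_one_div _ _).symm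

lemma cot_series (t : ℝ) (ht : t ∈ Set.Ioo 0 π) :
    Real.cot t - 1 / t = -2 * t * ∑' k : ℕ, 1 / (π ^ 2 * ((k : ℝ) + 1) ^ 2 - t ^ 2) := by
  obtain ⟨ht0, htπ⟩ := ht
  have hπ : 0 < π := pi_pos
  set b : ℝ := (t + π) / 2 with hb
  have htb : t < b := by simp [hb]; linarith
  have hbπ : b < π := by simp [hb]; linarith
  have hb0 : 0 < b := by linarith
  set s : Set ℝ := Set.Ioo 0 b with hs
  -- the functions
  set f : ℕ → ℝ → ℝ := fun n x => Real.log (1 - x ^ 2 / (π ^ 2 * ((n : ℝ) + 1) ^ 2)) with hf_def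
  set F : ℕ → ℝ → ℝ := fun n x => (-2 * x) / (π ^ 2 * ((n : ℝ) + 1) ^ 2 - x ^ 2) with hF_def
  set g : ℝ → ℝ := fun x => Real.log (Real.sin x) - Real.log x with hg_def
  have hc : ∀ n : ℕ, ∀ x ∈ s, x ^ 2 < π ^ 2 * ((n : ℝ) + 1) ^ 2 := by
    intro n x hx
    obtain ⟨hx0, hxb⟩ := hx
    have hn : (1 : ℝ) ≤ (n : ℝ) + 1 := by linarith [Nat.cast_nonneg (α := ℝ) n]
    have hn2 : (1 : ℝ) ≤ ((n : ℝ) + 1) ^ 2 := by nlinarith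
    have hπn : π ^ 2 * 1 ≤ π ^ 2 * ((n : ℝ) + 1) ^ 2 :=
      mul_le_mul_of_nonneg_left hn2 (by positivity)
    nlinarith
  have hcpos : ∀ n : ℕ, (0 : ℝ) < π ^ 2 * ((n : ℝ) + 1) ^ 2 := by
    intro n; positivity
  -- derivatives of the summands
  have hderiv : ∀ n : ℕ, ∀ x ∈ s, HasDerivAt (f n) (F n x) x := by
    intro n x hx
    set c : ℝ := π ^ 2 * ((n : ℝ) + 1) ^ 2 with hcd
    have hc0 : 0 < c := hcpos n
    have hx2 : x ^ 2 < c := hc n x hx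
    have hpos : 0 < 1 - x ^ 2 / c := by
      rw [sub_pos, div_lt_one hc0]; exact hx2
    have h1 : HasDerivAt (fun y : ℝ => y ^ 2) (2 * x) x := by
      simpa using hasDerivAt_pow 2 x
    have h2 : HasDerivAt (fun y : ℝ => 1 - y ^ 2 / c) (-(2 * x / c)) x :=
      (h1.div_const c).const_sub 1
    have h3 := h2.log hpos.ne'
    have h4 : -(2 * x / c) / (1 - x ^ 2 / c) = -2 * x / (c - x ^ 2) := by
      have h5 : (1 : ℝ) - x ^ 2 / c = (c - x ^ 2) / c := by field_simp
      rw [h5, div_div_eq_mul_div]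
      congr 1
      field_simp
    rw [h4] at h3
    simp only [hf_def, hF_def, ← hcd]
    exact h3
  -- uniform convergence of derivative series on s
  have hbound : ∀ (n : ℕ), ∀ x ∈ s, ‖F n x‖ ≤
      1 / (π ^ 2 - b ^ 2) * (1 / ((n : ℝ) + 1) ^ 2) * (2 * b) := by
    intro n x hx
    obtain ⟨hx0, hxb⟩ := hx
    have hn : (1 : ℝ) ≤ (n : ℝ) + 1 := by linarith [Nat.cast_nonneg (α := ℝ) n]
    have hn2 : (1 : ℝ) ≤ ((n : ℝ) + 1) ^ 2 := by nlinarith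
    have h1 : 0 < π ^ 2 - b ^ 2 := by nlinarith
    have hx2 : x ^ 2 < π ^ 2 * ((n : ℝ) + 1) ^ 2 := hc n x ⟨hx0, hxb⟩
    have h2 : 0 < (π ^ 2 - b ^ 2) * ((n : ℝ) + 1) ^ 2 := by positivity
    have hbn : b ^ 2 * 1 ≤ b ^ 2 * ((n : ℝ) + 1) ^ 2 :=
      mul_le_mul_of_nonneg_left hn2 (sq_nonneg b)
    have h3 : (π ^ 2 - b ^ 2) * ((n : ℝ) + 1) ^ 2 ≤ π ^ 2 * ((n : ℝ) + 1) ^ 2 - x ^ 2 := by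
      nlinarith
    have h4 : ‖F n x‖ = 2 * x / (π ^ 2 * ((n : ℝ) + 1) ^ 2 - x ^ 2) := by
      simp only [hF_def]
      rw [Real.norm_eq_abs, abs_div, abs_of_neg (show (-2 : ℝ) * x < 0 by linarith),
        abs_of_pos (show (0 : ℝ) < π ^ 2 * ((n : ℝ) + 1) ^ 2 - x ^ 2 from sub_pos.mpr hx2)]
      ring_nf
    rw [h4]
    calc 2 * x / (π ^ 2 * ((n : ℝ) + 1) ^ 2 - x ^ 2)
        ≤ 2 * b / ((π ^ 2 - b ^ 2) * ((n : ℝ) + 1) ^ 2) := by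
          apply div_le_div₀ (by positivity) (by linarith) h2 h3
      _ = 1 / (π ^ 2 - b ^ 2) * (1 / ((n : ℝ) + 1) ^ 2) * (2 * b) := by
          field_simp
  have hsum_u : Summable (fun n : ℕ =>
      1 / (π ^ 2 - b ^ 2) * (1 / ((n : ℝ) + 1) ^ 2) * (2 * b)) :=
    (summable_one_div_shift_sq.mul_left (1 / (π ^ 2 - b ^ 2))).mul_right (2 * b)
  have hUnif : TendstoUniformlyOn (fun N x => ∑ n ∈ Finset.range N, F n x)
      (fun x => ∑' n, F n x) atTop s :=
    tendstoUniformlyOn_tsum_nat hsum_u hbound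
  -- pointwise convergence of the log series to g
  have hfg : ∀ x ∈ s, Tendsto (fun N => ∑ n ∈ Finset.range N, f n x) atTop (𝓝 (g x)) := by
    intro x hx
    obtain ⟨hx0, hxb⟩ := hx
    have hxπ : x < π := hxb.trans hbπ
    have hsinx : 0 < Real.sin x := Real.sin_pos_of_pos_of_lt_pi hx0 hxπ
    have hfac : ∀ n : ℕ, (0 : ℝ) < 1 - x ^ 2 / (π ^ 2 * ((n : ℝ) + 1) ^ 2) := by
      intro n
      have := hc n x ⟨hx0, hxb⟩
      rw [sub_pos, div_lt_one (hcpos n)]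
      exact this
    have hE' : Tendsto (fun N : ℕ => x * ∏ n ∈ Finset.range N,
        (1 - x ^ 2 / (π ^ 2 * ((n : ℝ) + 1) ^ 2))) atTop (𝓝 (Real.sin x)) := by
      have hE := Real.tendsto_euler_sin_prod (x / π)
      have hπx : π * (x / π) = x := by field_simp
      rw [hπx] at hE
      refine Tendsto.congr (fun N => ?_) hE
      congr 1
      apply Finset.prod_congr rfl
      intro n _
      congr 1
      rw [div_pow, div_div]
    have hlog : Tendsto (fun N : ℕ => Real.log (x * ∏ n ∈ Finset.range N,
        (1 - x ^ 2 / (π ^ 2 * ((n : ℝ) + 1) ^ 2)))) atTop (𝓝 (Real.log (Real.sin x))) :=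
      ((Real.continuousAt_log hsinx.ne').tendsto).comp hE'
    have := hlog.sub (tendsto_const_nhds (x := Real.log x))
    refine Tendsto.congr (fun N => ?_) this
    have hprodpos : (0 : ℝ) < ∏ n ∈ Finset.range N, (1 - x ^ 2 / (π ^ 2 * ((n : ℝ) + 1) ^ 2)) :=
      Finset.prod_pos (fun n _ => hfac n)
    rw [Real.log_mul hx0.ne' hprodpos.ne', Real.log_prod (fun n _ => (hfac n).ne')]
    simp [hf_def]
  -- partial sums have the right derivatives
  have hpderiv : ∀ᶠ N : ℕ in atTop, ∀ x ∈ s, HasDerivAt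
      (fun x => ∑ n ∈ Finset.range N, f n x) (∑ n ∈ Finset.range N, F n x) x := by
    filter_upwards with N x hx
    exact HasDerivAt.fun_sum (fun n _ => hderiv n x hx)
  have hts : t ∈ s := ⟨ht0, htb⟩
  have hmain : HasDerivAt g (∑' n, F n t) t :=
    hasDerivAt_of_tendstoUniformlyOn isOpen_Ioo hUnif hpderiv hfg hts
  -- compute derivative of g directly
  have hsint : 0 < Real.sin t := Real.sin_pos_of_pos_of_lt_pi ht0 htπ
  have hg1 : HasDerivAt (fun x => Real.log (Real.sin x)) (Real.cos t / Real.sin t) t :=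
    (Real.hasDerivAt_sin t).log hsint.ne'
  have hg2 : HasDerivAt g (Real.cos t / Real.sin t - 1 / t) t := by
    have := hg1.fun_sub (Real.hasDerivAt_log ht0.ne')
    simpa [one_div] using this
  have heq := hg2.unique hmain
  rw [Real.cot_eq_cos_div_sin, heq]
  rw [hF_def]
  have : ∀ n : ℕ, (-2 * t) / (π ^ 2 * ((n : ℝ) + 1) ^ 2 - t ^ 2)
      = (-2 * t) * (1 / (π ^ 2 * ((n : ℝ) + 1) ^ 2 - t ^ 2)) := by
    intro n; rw [mul_one_div]
  simp_rw [this]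
  rw [tsum_mul_left]

theorem cot_quantitative_estimate (t β : ℝ) (ht : t ∈ Set.Ioo 0 π)
    (hβ : β ∈ Set.Ico 0 (π / 2)) (htβ : t < β + π / 2) :
    (t * Real.cot t - 1) / t ^ 2 =
      -2 * ∑' k : ℕ, 1 / (π ^ 2 * ((k : ℝ) + 1) ^ 2 - t ^ 2) ∧
    -2 * ∑' k : ℕ, 1 / (π ^ 2 * ((k : ℝ) + 1) ^ 2 - t ^ 2) ≥
      -2 * (1 / (π ^ 2 - (β + π / 2) ^ 2) + 3 / (4 * π ^ 2)) := by
  obtain ⟨ht0, htπ⟩ := ht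
  obtain ⟨hβ0, hβπ⟩ := hβ
  have hπ : 0 < π := pi_pos
  set S : ℝ := ∑' k : ℕ, 1 / (π ^ 2 * ((k : ℝ) + 1) ^ 2 - t ^ 2) with hS_def
  have hser := cot_series t ⟨ht0, htπ⟩
  have hSummable : Summable (fun k : ℕ => 1 / (π ^ 2 * ((k : ℝ) + 1) ^ 2 - t ^ 2)) :=
    summable_cot_aux t ht0 le_rfl htπ
  constructor
  · have h1 : t * Real.cot t - 1 = -2 * S * t ^ 2 := by
      have h2 : t * (Real.cot t - 1 / t) = t * (-2 * t * S) := by rw [hser]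
      have h3 : t * (1 / t) = 1 := by field_simp
      nlinarith [h2, h3]
    rw [h1]
    field_simp
  · have hB : β + π / 2 < π := by linarith
    have hB0 : 0 < β + π / 2 := by linarith
    have hd1 : 0 < π ^ 2 - (β + π / 2) ^ 2 := by nlinarith
    suffices hSA : S ≤ 1 / (π ^ 2 - (β + π / 2) ^ 2) + 3 / (4 * π ^ 2) by nlinarith
    rw [hS_def, Summable.tsum_eq_zero_add hSummable]
    have h0 : 1 / (π ^ 2 * ((0 : ℕ) + (1 : ℝ)) ^ 2 - t ^ 2) ≤ 1 / (π ^ 2 - (β + π / 2) ^ 2) := by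
      apply one_div_le_one_div_of_le hd1
      push_cast
      nlinarith
    have htail : (∑' k : ℕ, 1 / (π ^ 2 * (((k : ℕ) + 1 : ℕ) + (1 : ℝ)) ^ 2 - t ^ 2))
        ≤ 3 / (4 * π ^ 2) := by
      have hnn : ∀ k : ℕ, (0 : ℝ) ≤ 1 / (π ^ 2 * (((k : ℕ) + 1 : ℕ) + (1 : ℝ)) ^ 2 - t ^ 2) := by
        intro k
        have hk : (1 : ℝ) ≤ ((k : ℕ) + 1 : ℕ) + (1 : ℝ) := by
          push_cast; linarith [Nat.cast_nonneg (α := ℝ) k]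
        have hk2 : (1 : ℝ) ≤ (((k : ℕ) + 1 : ℕ) + (1 : ℝ)) ^ 2 := by nlinarith
        have hπ2 : π ^ 2 * 1 ≤ π ^ 2 * (((k : ℕ) + 1 : ℕ) + (1 : ℝ)) ^ 2 :=
          mul_le_mul_of_nonneg_left hk2 (by positivity)
        have : t ^ 2 < π ^ 2 * (((k : ℕ) + 1 : ℕ) + (1 : ℝ)) ^ 2 := by nlinarith
        exact one_div_nonneg.mpr (by linarith)
      apply tsum_le_of_sum_range_le hnn
      intro n
      set G : ℕ → ℝ := fun i => (1 / ((i : ℝ) + 1) + 1 / ((i : ℝ) + 2)) / (2 * π ^ 2) with hG_def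
      have hterm : ∀ i : ℕ, 1 / (π ^ 2 * (((i : ℕ) + 1 : ℕ) + (1 : ℝ)) ^ 2 - t ^ 2)
          ≤ G i - G (i + 1) := by
        intro i
        have hi : (0 : ℝ) ≤ (i : ℝ) := Nat.cast_nonneg i
        have hGd : G i - G (i + 1) = 1 / (π ^ 2 * ((i : ℝ) + 1) * ((i : ℝ) + 3)) := by
          rw [hG_def]
          push_cast
          field_simp
          ring
        rw [hGd]
        have hden : 0 < π ^ 2 * ((i : ℝ) + 1) * ((i : ℝ) + 3) := by positivity
        apply one_div_le_one_div_of_le hden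
        push_cast
        nlinarith
      calc ∑ i ∈ Finset.range n, 1 / (π ^ 2 * (((i : ℕ) + 1 : ℕ) + (1 : ℝ)) ^ 2 - t ^ 2)
          ≤ ∑ i ∈ Finset.range n, (G i - G (i + 1)) := Finset.sum_le_sum (fun i _ => hterm i)
        _ = G 0 - G n := Finset.sum_range_sub' G n
        _ ≤ G 0 := by
            have : 0 ≤ G n := by
              rw [hG_def]; positivity
            linarith
        _ = 3 / (4 * π ^ 2) := by
            rw [hG_def]
            norm_num
            ring

    calc 1 / (π ^ 2 * ((0 : ℕ) + (1 : ℝ)) ^ 2 - t ^ 2)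
          + ∑' k : ℕ, 1 / (π ^ 2 * (((k : ℕ) + 1 : ℕ) + (1 : ℝ)) ^ 2 - t ^ 2)
        ≤ 1 / (π ^ 2 - (β + π / 2) ^ 2) + 3 / (4 * π ^ 2) := add_le_add h0 htail
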